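/- Let n ≥ 1 be an integer with n ≡ 3 (mod 6) such that 4n+1 is prime. Then there is no splitting ℤ_{4n+1} = (M,S) with multiplier set M = {-1,1,2,3} and |S| = n. (Equivalently, the (3,1,n)-quasi-cross does not lattice tile ℝⁿ for such n.) -/

import Mathlib

/-- `(M, S)` is a splitting of `ℤ_q`: `M ⊆ ℤ \ {0}`, and the products `m·s`
(for `m ∈ M`, `s ∈ S`) are pairwise distinct and cover exactly the nonzero
elements of `ZMod q`. -/
def IsSplitting (q : ℕ) (M : Finset ℤ) (S : Finset (ZMod q)) : Prop :=
  (0 : ℤ) ∉ M ∧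
  Set.InjOn (fun p : ℤ × ZMod q => (p.1 : ZMod q) * p.2) ↑(M ×ˢ S) ∧
  (fun p : ℤ × ZMod q => (p.1 : ZMod q) * p.2) '' ↑(M ×ˢ S) = {a : ZMod q | a ≠ 0}

theorem stmt_2 (n : ℕ) (hn : 1 ≤ n) (hmod : n % 6 = 3) (hp : Nat.Prime (4 * n + 1)) :
    ¬ ∃ S : Finset (ZMod (4 * n + 1)),
        IsSplitting (4 * n + 1) ({-1, 1, 2, 3} : Finset ℤ) S ∧ S.card = n := by
  rintro ⟨S, ⟨h0, hinj, himg⟩, hcard⟩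
  haveI hF : Fact (Nat.Prime (4 * n + 1)) := ⟨hp⟩
  haveI hF3 : Fact (Nat.Prime 3) := ⟨by norm_num⟩
  have hn3 : 3 ≤ n := by omega
  have hq13 : 13 ≤ 4 * n + 1 := by omega
  set M : Finset ℤ := {-1, 1, 2, 3} with hM
  set f : ℤ × ZMod (4 * n + 1) → ZMod (4 * n + 1) :=
    fun p => (p.1 : ZMod (4 * n + 1)) * p.2 with hf
  -- the image of the product map, as a Finset, is everything except 0
  have hT : (M ×ˢ S).image f = Finset.univ \ {0} := by
    apply Finset.coe_injective
    rw [Finset.coe_image, himg]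
    ext a
    simp
  -- Wilson: the product of all nonzero elements of `ZMod (4n+1)` is -1
  have hW : ∏ x ∈ (Finset.univ \ {0} : Finset (ZMod (4 * n + 1))), x = -1 := by
    have h1 : ∏ x ∈ (Finset.univ \ {0} : Finset (ZMod (4 * n + 1))), x
        = ∏ u : (ZMod (4 * n + 1))ˣ, (u : ZMod (4 * n + 1)) := by
      refine Finset.prod_bij'
        (fun x hx => Units.mk0 x (by simpa using (Finset.mem_sdiff.mp hx).2))
        (fun u _ => (u : ZMod (4 * n + 1))) (fun x hx => Finset.mem_univ _)
        (fun u _ => by simp) (fun x hx => rfl) (fun u _ => by simp) (fun x hx => rfl)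
    rw [h1, ← Units.coe_prod, FiniteField.prod_univ_units_id_eq_neg_one]
    simp
  -- compute the product over `M ×ˢ S`
  have hMprod : ∏ m ∈ M, (m : ZMod (4 * n + 1)) = -6 := by
    rw [hM]
    norm_num [Finset.prod_insert, Finset.mem_insert]
  have hprod : ∏ p ∈ M ×ˢ S, f p
      = (-6 : ZMod (4 * n + 1)) ^ n * (∏ s ∈ S, s) ^ 4 := by
    rw [Finset.prod_product]
    have hstep : ∀ m ∈ M, ∏ s ∈ S, f (m, s)
        = (m : ZMod (4 * n + 1)) ^ n * ∏ s ∈ S, s := by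
      intro m _
      rw [hf]
      simp only
      rw [Finset.prod_mul_distrib, Finset.prod_const, hcard]
    have hMcard : M.card = 4 := by rw [hM]; decide
    rw [Finset.prod_congr rfl hstep, Finset.prod_mul_distrib, Finset.prod_const,
      Finset.prod_pow, hMprod, hMcard]
  -- combine: (-6)^n * t^4 = -1
  set t : ZMod (4 * n + 1) := ∏ s ∈ S, s with ht
  have hinj' : ∀ x ∈ M ×ˢ S, ∀ y ∈ M ×ˢ S, f x = f y → x = y := by
    intro x hx y hy hxy
    exact hinj (Finset.mem_coe.mpr hx) (Finset.mem_coe.mpr hy) hxy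
  have key : (-6 : ZMod (4 * n + 1)) ^ n * t ^ 4 = -1 := by
    have himage := Finset.prod_image (f := fun x => x) (g := f) hinj'
    rw [← hprod, ← himage, hT]
    exact hW
  obtain ⟨k, hk⟩ : ∃ k, n = 2 * k + 1 := ⟨n / 2, by omega⟩
  have hodd : Odd n := ⟨k, by omega⟩
  have h6 : (6 : ZMod (4 * n + 1)) ^ n * t ^ 4 = 1 := by
    rw [Odd.neg_pow hodd] at key
    linear_combination -key
  -- 6 is a square mod 4n+1
  have hc : (6 : ZMod (4 * n + 1)) * ((6 : ZMod (4 * n + 1)) ^ k * t ^ 2) ^ 2 = 1 := by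
    have hpow : (6 : ZMod (4 * n + 1)) ^ n = (6 : ZMod (4 * n + 1)) ^ (2 * k + 1) :=
      congrArg _ hk
    linear_combination h6 - t ^ 4 * hpow
  have hcne : (6 : ZMod (4 * n + 1)) ^ k * t ^ 2 ≠ 0 := by
    intro h
    rw [h] at hc
    simp at hc
  have hsq6 : IsSquare (6 : ZMod (4 * n + 1)) := by
    refine ⟨((6 : ZMod (4 * n + 1)) ^ k * t ^ 2)⁻¹, ?_⟩
    have hx := mul_inv_cancel₀ hcne
    linear_combination ((6 : ZMod (4 * n + 1)) ^ k * t ^ 2)⁻¹ ^ 2 * hc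
      - 6 * ((6 : ZMod (4 * n + 1)) ^ k * t ^ 2 * ((6 : ZMod (4 * n + 1)) ^ k * t ^ 2)⁻¹ + 1) * hx
  -- 3 is a square mod 4n+1
  have hsq3 : IsSquare (3 : ZMod (4 * n + 1)) := by
    have h3 : IsSquare (((3 : ℕ)) : ZMod (4 * n + 1)) := by
      rw [ZMod.exists_sq_eq_prime_iff_of_mod_four_eq_one (p := 4 * n + 1) (q := 3)
        (by omega) (by norm_num)]
      rw [← ZMod.natCast_mod, (show (4 * n + 1) % 3 = 1 by omega)]
      simp
    simpa using h3
  -- hence 2 is a square mod 4n+1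
  have h3ne : (3 : ZMod (4 * n + 1)) ≠ 0 := by
    have : ((3 : ℕ) : ZMod (4 * n + 1)) ≠ 0 := by
      rw [Ne, ZMod.natCast_eq_zero_iff]
      intro h
      have := Nat.le_of_dvd (by norm_num) h
      omega
    simpa using this
  obtain ⟨a, ha⟩ := hsq3
  obtain ⟨b, hb⟩ := hsq6
  have hane : a ≠ 0 := by
    intro h
    rw [h, mul_zero] at ha
    exact h3ne ha
  have hsq2 : IsSquare (2 : ZMod (4 * n + 1)) := by
    refine ⟨b * a⁻¹, ?_⟩
    field_simp
    linear_combination hb - 2 * ha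
  -- contradiction with 4n+1 ≡ 5 (mod 8)
  have := (ZMod.exists_sq_eq_two_iff (by omega : 4 * n + 1 ≠ 2)).mp hsq2
  omega
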